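/- Along the x-axis the second-order non-symmetric rogue wave reduces to the real rational function q^[2](x,0) = (16x⁶ − 48x⁵ + 24x⁴ + 24x³ − 72x² + 36x + 9)/H2(x,0), with H2(x,0) = 16x⁶ − 48x⁵ + 72x⁴ − 72x³ + 72x² − 36x + 9 > 0, and the set of real zeros of q^[2](·,0), i.e. the set { x ∈ ℝ : 16x⁶ − 48x⁵ + 24x⁴ + 24x³ − 72x² + 36x + 9 = 0 }, has exactly four elements. That is, the non-symmetric second-order rogue wave has exactly four zero-amplitude points on the x-axis, but (unlike the symmetric case) they are not distributed symmetrically about x = 0. -/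

import Mathlib

open Complex

noncomputable section

/-- The denominator `H2` of the second-order non-symmetric rogue wave. -/
def H2 (x t : ℝ) : ℝ :=
  1024 * t ^ 6 + 768 * x ^ 2 * t ^ 4 - 768 * t ^ 4 * x + 1920 * t ^ 4
    + 192 * x ^ 4 * t ^ 2 - 384 * x ^ 3 * t ^ 2 + 288 * x * t ^ 2 + 288 * t ^ 2
    + 16 * x ^ 6 - 48 * x ^ 5 + 72 * x ^ 4 - 72 * x ^ 3 + 72 * x ^ 2 - 36 * x + 9

/-- The numerator `F2` of the second-order non-symmetric rogue wave:
`F2 = 12i√2·(A + i·B)` with real polynomials `A`, `B`. -/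
def F2 (x t : ℝ) : ℂ :=
  12 * Complex.I * ((Real.sqrt 2 : ℝ) : ℂ) *
    (((12 * t - 32 * t ^ 3 - 12 * x * t + 16 * x ^ 3 * t + 64 * t ^ 3 * x - 8 * x ^ 4 * t
          - 64 * x ^ 2 * t ^ 3 - 128 * t ^ 5 : ℝ) : ℂ)
      + Complex.I *
        ((48 * x ^ 2 * t ^ 2 - 4 * x ^ 3 + 6 * x ^ 2 + 160 * t ^ 4 - 48 * x * t ^ 2
            + 48 * t ^ 2 + 2 * x ^ 4 - 3 * x : ℝ) : ℂ))

/-- The second-order non-symmetric doubly-localized rogue wave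
`q^[2](x,t) = √2·(√2/2 + F2/H2)·e^{2it}` of the focusing NLS equation. -/
def qtwo (p : ℝ × ℝ) : ℂ :=
  ((Real.sqrt 2 : ℝ) : ℂ)
    * (((Real.sqrt 2 / 2 : ℝ) : ℂ) + F2 p.1 p.2 / ((H2 p.1 p.2 : ℝ) : ℂ))
    * Complex.exp (2 * Complex.I * (p.2 : ℂ))

/-- The numerator polynomial of `q^[2](x,0)`. -/
def Pf : ℝ → ℝ := fun x => 16*x^6 - 48*x^5 + 24*x^4 + 24*x^3 - 72*x^2 + 36*x + 9

lemma Pf_cont : Continuous Pf := by unfold Pf; continuity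

lemma Pf_hasDeriv (x : ℝ) :
    HasDerivAt Pf (96*x^5 - 240*x^4 + 96*x^3 + 72*x^2 - 144*x + 36) x := by
  have h := ((((((((hasDerivAt_pow 6 x).const_mul (16:ℝ)).sub
      ((hasDerivAt_pow 5 x).const_mul 48)).add
      ((hasDerivAt_pow 4 x).const_mul 24)).add
      ((hasDerivAt_pow 3 x).const_mul 24)).sub
      ((hasDerivAt_pow 2 x).const_mul 72)).add
      ((hasDerivAt_id x).const_mul 36)).add_const 9)
  have h' : HasDerivAt Pf (16 * (↑6 * x ^ (6 - 1)) - 48 * (↑5 * x ^ (5 - 1))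
      + 24 * (↑4 * x ^ (4 - 1)) + 24 * (↑3 * x ^ (3 - 1))
      - 72 * (↑2 * x ^ (2 - 1)) + 36 * 1) x := by
    unfold Pf; simpa using h
  convert h' using 1
  norm_num
  ring

lemma Pf_deriv (x : ℝ) :
    deriv Pf x = 96*x^5 - 240*x^4 + 96*x^3 + 72*x^2 - 144*x + 36 :=
  (Pf_hasDeriv x).deriv

lemma Pf_anti1 : StrictAntiOn Pf (Set.Iic (-1 : ℝ)) := by
  apply strictAntiOn_of_deriv_neg (convex_Iic _) Pf_cont.continuousOn
  intro x hx
  rw [interior_Iic, Set.mem_Iio] at hx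
  rw [Pf_deriv]
  nlinarith [sq_nonneg (x+1), sq_nonneg (x^2+x),
    mul_nonneg (mul_nonneg (sq_nonneg (x+1)) (sq_nonneg x)) (show (0:ℝ) ≤ -x by linarith)]

lemma Pf_mono2 : StrictMonoOn Pf (Set.Icc (-(3/4) : ℝ) (1/4)) := by
  apply strictMonoOn_of_deriv_pos (convex_Icc _ _) Pf_cont.continuousOn
  intro x hx
  rw [interior_Icc, Set.mem_Ioo] at hx
  obtain ⟨h1, h2⟩ := hx
  rw [Pf_deriv]
  nlinarith [sq_nonneg (x+3/4), sq_nonneg (x-1/4), sq_nonneg x, sq_nonneg (x^2-x),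
    mul_nonneg (show (0:ℝ) ≤ x+3/4 by linarith) (show (0:ℝ) ≤ 1/4-x by linarith),
    sq_nonneg (x^2+x)]

lemma Pf_anti3 : StrictAntiOn Pf (Set.Icc (1/2 : ℝ) (9/5)) := by
  apply strictAntiOn_of_deriv_neg (convex_Icc _ _) Pf_cont.continuousOn
  intro x hx
  rw [interior_Icc, Set.mem_Ioo] at hx
  obtain ⟨h1, h2⟩ := hx
  rw [Pf_deriv]
  nlinarith [sq_nonneg (x-1/2), sq_nonneg (x-9/5), sq_nonneg (x-1),
    mul_nonneg (show (0:ℝ) ≤ x-1/2 by linarith) (show (0:ℝ) ≤ 9/5-x by linarith),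
    sq_nonneg (x^2-x), sq_nonneg (x^2-2*x)]

lemma Pf_mono4 : StrictMonoOn Pf (Set.Ici (21/10 : ℝ)) := by
  apply strictMonoOn_of_deriv_pos (convex_Ici _) Pf_cont.continuousOn
  intro x hx
  rw [interior_Ici, Set.mem_Ioi] at hx
  rw [Pf_deriv]
  nlinarith [sq_nonneg (x-21/10), sq_nonneg (x-3), sq_nonneg (x^2-2*x)]

lemma Pf_neg1 {x : ℝ} (h1 : -1 ≤ x) (h2 : x ≤ -(3/4)) : Pf x < 0 := by
  unfold Pf
  nlinarith [sq_nonneg (x+1), sq_nonneg (x+3/4),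
    mul_nonneg (show (0:ℝ) ≤ x+1 by linarith) (show (0:ℝ) ≤ -(3/4)-x by linarith),
    sq_nonneg (x^2+x), sq_nonneg (x+7/8)]

lemma Pf_pos2 {x : ℝ} (h1 : 1/4 ≤ x) (h2 : x ≤ 1/2) : 0 < Pf x := by
  unfold Pf
  nlinarith [mul_nonneg (show (0:ℝ) ≤ x-1/4 by linarith) (show (0:ℝ) ≤ 1/2-x by linarith),
    sq_nonneg (x-1/4), sq_nonneg (x-1/2), sq_nonneg (x^2-x)]

lemma Pf_neg3 {x : ℝ} (h1 : 9/5 ≤ x) (h2 : x ≤ 21/10) : Pf x < 0 := by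
  unfold Pf
  nlinarith [mul_nonneg (show (0:ℝ) ≤ x-9/5 by linarith) (show (0:ℝ) ≤ 21/10-x by linarith),
    sq_nonneg (x-2), sq_nonneg (x^2-2*x), sq_nonneg (x-9/5), sq_nonneg (x-21/10)]

lemma Pf_roots_card :
    Set.ncard {x : ℝ |
      16 * x ^ 6 - 48 * x ^ 5 + 24 * x ^ 4 + 24 * x ^ 3 - 72 * x ^ 2 + 36 * x + 9 = 0} = 4 := by
  have hset : {x : ℝ |
      16 * x ^ 6 - 48 * x ^ 5 + 24 * x ^ 4 + 24 * x ^ 3 - 72 * x ^ 2 + 36 * x + 9 = 0}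
      = {x : ℝ | Pf x = 0} := by
    ext x; simp [Pf]
  rw [hset]
  -- four roots by IVT
  obtain ⟨r1, hr1m, hr1⟩ : ∃ r ∈ Set.Icc (-2 : ℝ) (-1), Pf r = 0 := by
    have h := intermediate_value_Icc' (by norm_num : (-2:ℝ) ≤ -1) Pf_cont.continuousOn
    have : (0:ℝ) ∈ Set.Icc (Pf (-1)) (Pf (-2)) := by
      constructor <;> · unfold Pf; norm_num
    obtain ⟨r, hm, hr⟩ := h this
    exact ⟨r, hm, hr⟩
  obtain ⟨r2, hr2m, hr2⟩ : ∃ r ∈ Set.Icc (-(3/4) : ℝ) (1/4), Pf r = 0 := by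
    have h := intermediate_value_Icc (by norm_num : (-(3/4):ℝ) ≤ 1/4) Pf_cont.continuousOn
    have : (0:ℝ) ∈ Set.Icc (Pf (-(3/4))) (Pf (1/4)) := by
      constructor <;> · unfold Pf; norm_num
    obtain ⟨r, hm, hr⟩ := h this
    exact ⟨r, hm, hr⟩
  obtain ⟨r3, hr3m, hr3⟩ : ∃ r ∈ Set.Icc (1/2 : ℝ) (9/5), Pf r = 0 := by
    have h := intermediate_value_Icc' (by norm_num : (1/2:ℝ) ≤ 9/5) Pf_cont.continuousOn
    have : (0:ℝ) ∈ Set.Icc (Pf (9/5)) (Pf (1/2)) := by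
      constructor <;> · unfold Pf; norm_num
    obtain ⟨r, hm, hr⟩ := h this
    exact ⟨r, hm, hr⟩
  obtain ⟨r4, hr4m, hr4⟩ : ∃ r ∈ Set.Icc (21/10 : ℝ) 3, Pf r = 0 := by
    have h := intermediate_value_Icc (by norm_num : (21/10:ℝ) ≤ 3) Pf_cont.continuousOn
    have : (0:ℝ) ∈ Set.Icc (Pf (21/10)) (Pf 3) := by
      constructor <;> · unfold Pf; norm_num
    obtain ⟨r, hm, hr⟩ := h this
    exact ⟨r, hm, hr⟩
  obtain ⟨hr1a, hr1b⟩ := hr1m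
  obtain ⟨hr2a, hr2b⟩ := hr2m
  obtain ⟨hr3a, hr3b⟩ := hr3m
  obtain ⟨hr4a, hr4b⟩ := hr4m
  have hS : {x : ℝ | Pf x = 0} = {r1, r2, r3, r4} := by
    ext x
    simp only [Set.mem_setOf_eq, Set.mem_insert_iff, Set.mem_singleton_iff]
    constructor
    · intro hx
      rcases le_or_gt x (-1) with h | h
      · left
        exact Pf_anti1.injOn (Set.mem_Iic.2 h) (Set.mem_Iic.2 hr1b) (hx.trans hr1.symm)
      rcases le_or_gt x (-(3/4)) with h' | h'
      · exact absurd hx (Pf_neg1 h.le h').ne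
      rcases le_or_gt x (1/4) with h'' | h''
      · right; left
        exact Pf_mono2.injOn (Set.mem_Icc.2 ⟨h'.le, h''⟩) (Set.mem_Icc.2 ⟨hr2a, hr2b⟩)
          (hx.trans hr2.symm)
      rcases le_or_gt x (1/2) with h3 | h3
      · exact absurd hx (Pf_pos2 h''.le h3).ne'
      rcases le_or_gt x (9/5) with h4 | h4
      · right; right; left
        exact Pf_anti3.injOn (Set.mem_Icc.2 ⟨h3.le, h4⟩) (Set.mem_Icc.2 ⟨hr3a, hr3b⟩)
          (hx.trans hr3.symm)
      rcases le_or_gt x (21/10) with h5 | h5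
      · exact absurd hx (Pf_neg3 h4.le h5).ne
      · right; right; right
        exact Pf_mono4.injOn (Set.mem_Ici.2 h5.le) (Set.mem_Ici.2 hr4a)
          (hx.trans hr4.symm)
    · rintro (rfl | rfl | rfl | rfl) <;> assumption
  rw [hS]
  have h12 : r1 < r2 := by linarith
  have h23 : r2 < r3 := by linarith
  have h34 : r3 < r4 := by linarith
  have hne1 : r1 ∉ ({r2, r3, r4} : Set ℝ) := by
    simp only [Set.mem_insert_iff, Set.mem_singleton_iff]
    push_neg
    exact ⟨by linarith, by linarith, by linarith⟩
  have hne2 : r2 ∉ ({r3, r4} : Set ℝ) := by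
    simp only [Set.mem_insert_iff, Set.mem_singleton_iff]
    push_neg
    exact ⟨by linarith, by linarith⟩
  rw [Set.ncard_insert_of_notMem hne1, Set.ncard_insert_of_notMem hne2,
      Set.ncard_pair (by linarith : r3 ≠ r4)]

/-- along the `x`-axis the second-order non-symmetric rogue wave reduces to
the real rational function
`q^[2](x,0) = (16x⁶ − 48x⁵ + 24x⁴ + 24x³ − 72x² + 36x + 9)/H2(x,0)`, with
`H2(x,0) = 16x⁶ − 48x⁵ + 72x⁴ − 72x³ + 72x² − 36x + 9 > 0`, and the set of its real zeros
has exactly four elements (not distributed symmetrically about `x = 0`). -/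
theorem qtwo_zeros_on_x_axis :
    (∀ x : ℝ,
      qtwo (x, 0)
        = (((16 * x ^ 6 - 48 * x ^ 5 + 24 * x ^ 4 + 24 * x ^ 3 - 72 * x ^ 2 + 36 * x + 9)
            / H2 x 0 : ℝ) : ℂ)) ∧
    (∀ x : ℝ,
      H2 x 0 = 16 * x ^ 6 - 48 * x ^ 5 + 72 * x ^ 4 - 72 * x ^ 3 + 72 * x ^ 2 - 36 * x + 9 ∧
      H2 x 0 > 0) ∧
    Set.ncard {x : ℝ |
      16 * x ^ 6 - 48 * x ^ 5 + 24 * x ^ 4 + 24 * x ^ 3 - 72 * x ^ 2 + 36 * x + 9 = 0} = 4 := by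
  have hHval : ∀ x : ℝ,
      H2 x 0 = 16 * x ^ 6 - 48 * x ^ 5 + 72 * x ^ 4 - 72 * x ^ 3 + 72 * x ^ 2 - 36 * x + 9 := by
    intro x; unfold H2; ring
  have hHpos : ∀ x : ℝ, H2 x 0 > 0 := by
    intro x
    rw [hHval x]
    nlinarith [sq_nonneg (x^3-x), sq_nonneg (x^3-2*x^2), sq_nonneg (x^2-x), sq_nonneg (2*x-1),
      sq_nonneg x, sq_nonneg (x^3-x^2), sq_nonneg (x^2-1), sq_nonneg (x^3-1),
      sq_nonneg (x^3 - 1.5*x^2)]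
  refine ⟨?_, fun x => ⟨hHval x, hHpos x⟩, Pf_roots_card⟩
  intro x
  have hH' : ((H2 x 0 : ℝ) : ℂ) ≠ 0 := by exact_mod_cast (hHpos x).ne'
  have h2 : ((Real.sqrt 2 : ℝ) : ℂ) * ((Real.sqrt 2 : ℝ) : ℂ) = 2 := by
    norm_cast
    exact Real.mul_self_sqrt (by norm_num)
  have h2' : ((Real.sqrt 2 : ℝ) : ℂ)^2 = 2 := by rw [sq]; exact h2
  rw [hHval x] at hH' ⊢
  unfold qtwo F2
  simp only [Complex.ofReal_zero, mul_zero, Complex.exp_zero, mul_one]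
  rw [show ((H2 x 0 : ℝ) : ℂ)
      = ((16 * x ^ 6 - 48 * x ^ 5 + 72 * x ^ 4 - 72 * x ^ 3 + 72 * x ^ 2 - 36 * x + 9 : ℝ) : ℂ)
      by rw [hHval x]]
  push_cast at hH' ⊢
  field_simp
  have hH'' : (↑x * (↑x * (↑x * (↑x * (↑x * (↑x * 16 - 48) + 72) - 72) + 72) - 36) + 9 : ℂ) ≠ 0 := by
    convert hH' using 1; ring
  field_simp
  ring_nf
  simp only [Complex.I_sq, h2']
  ring

end
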